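/- Define P₋(T) := ∏_{j=1}^{2n} (T + (1+φζ^j)/(1−φζ^j)) ∈ F̄[T]. Then P₋′(−y)·P₋(−1) is a nonzero element of L, and P₋′(−y)·P₋(−1) ≡ (2φ^{−1}/(1−φ)^{2n−1})·(2n/(1+φ)) modulo N_{L/K}(L^×); that is, there exists z ∈ L^× with P₋′(−y)·P₋(−1) = (2φ^{−1}/(1−φ)^{2n−1})·(2n/(1+φ))·N_{L/K}(z). (Lemma computing P₋′(−y_u)·P₋(−1) modulo norms, used in the evaluation of transfer factors.) -/

import Mathlib

open Polynomial

/-- **Computation of `P₋′(−y)·P₋(−1)` modulo norms.** Let `F` be a field of characteristic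
zero, `n ≥ 1`, and `c ∈ F^×` with `X^{2n} − c` irreducible over `F`. Fix a root `φ` of
`X^{2n} − c` and a primitive `2n`-th root of unity `ζ` in an algebraic closure of `F`, and
set `L := F(φ)`, `K := F(φ²)` and `y := (1+φ)/(1−φ)`. Let
`P₋(T) := ∏_{j=1}^{2n} (T + (1+φζ^j)/(1−φζ^j))`. Then `P₋′(−y)·P₋(−1)` is a nonzero element
of `L` and is congruent to `(2φ^{−1}/(1−φ)^{2n−1})·(2n/(1+φ))` modulo `N_{L/K}(L^×)`; here
`N_{L/K}(L^×) = {a² − b²φ² ≠ 0 : a, b ∈ K}` since `L = K(φ)` with `φ² ∈ K` and `[L:K] = 2`. -/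
theorem pval_neg_mod_norms {F : Type*} [Field F] [CharZero F]
    (n : ℕ) (hn : 1 ≤ n) (c : F) (hc : c ≠ 0)
    (hirr : Irreducible (X ^ (2 * n) - C c : F[X]))
    (φ ζ : AlgebraicClosure F)
    (hφ : φ ^ (2 * n) = algebraMap F (AlgebraicClosure F) c)
    (hζ : IsPrimitiveRoot ζ (2 * n))
    (P : Polynomial (AlgebraicClosure F))
    (hP : P = ∏ j ∈ Finset.range (2 * n), (X + C ((1 + φ * ζ ^ j) / (1 - φ * ζ ^ j)))) :
    (Polynomial.derivative P).eval (-((1 + φ) / (1 - φ))) * P.eval (-1) ∈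
        IntermediateField.adjoin F {φ} ∧
    (Polynomial.derivative P).eval (-((1 + φ) / (1 - φ))) * P.eval (-1) ≠ 0 ∧
    ∃ a b : AlgebraicClosure F,
      a ∈ IntermediateField.adjoin F {φ ^ 2} ∧ b ∈ IntermediateField.adjoin F {φ ^ 2} ∧
      a ^ 2 - b ^ 2 * φ ^ 2 ≠ 0 ∧
      (Polynomial.derivative P).eval (-((1 + φ) / (1 - φ))) * P.eval (-1) =
        (2 * φ⁻¹ / (1 - φ) ^ (2 * n - 1)) *
          ((2 * n : AlgebraicClosure F) / (1 + φ)) * (a ^ 2 - b ^ 2 * φ ^ 2) := by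
  classical
  set cc : AlgebraicClosure F := algebraMap F (AlgebraicClosure F) c with hccdef
  have h2n : 0 < 2 * n := by omega
  have hcc0 : cc ≠ 0 := by
    simpa [hccdef] using (map_ne_zero (algebraMap F (AlgebraicClosure F))).mpr hc
  have hcne1 : c ≠ 1 := by
    intro h
    subst h
    have hroot : (X ^ (2 * n) - C (1:F)).IsRoot 1 := by simp
    obtain ⟨q, hq⟩ := (dvd_iff_isRoot.mpr hroot)
    rcases hirr.isUnit_or_isUnit hq with h1 | h1
    · exact (Polynomial.not_isUnit_X_sub_C (1:F)) h1
    · have hdq : q.degree = 0 := degree_eq_zero_of_isUnit h1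
      have hdeg := degree_X_pow_sub_C h2n (1:F)
      rw [hq, degree_mul, hdq, degree_X_sub_C, add_zero] at hdeg
      norm_cast at hdeg
      omega
  have hcc1 : cc ≠ 1 := by
    intro h
    exact hcne1 ((algebraMap F (AlgebraicClosure F)).injective (by simpa [hccdef] using h))
  have h1cc : 1 - cc ≠ 0 := by
    intro h
    exact hcc1 (by linear_combination -h)
  have hζone : ζ ^ (2 * n) = 1 := hζ.pow_eq_one
  have hζn : ζ ^ n = -1 := by
    have h1 : ζ ^ n * ζ ^ n = 1 := by
      rw [← pow_add]
      convert hζone using 2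
      omega
    rcases mul_self_eq_one_iff.mp h1 with h | h
    · exact absurd h (hζ.pow_ne_one_of_pos_of_lt (by omega) (by omega))
    · exact h
  have hφ0 : φ ≠ 0 := by
    intro h
    apply hcc0
    rw [← hφ, h, zero_pow (by omega : 2 * n ≠ 0)]
  have hone_sub : ∀ j : ℕ, 1 - φ * ζ ^ j ≠ 0 := by
    intro j h
    have h1 : φ * ζ ^ j = 1 := by linear_combination -h
    apply hcc1
    have h2 : (ζ ^ j) ^ (2 * n) = 1 := by
      rw [← pow_mul, mul_comm, pow_mul, hζone, one_pow]
    have h3 : (φ * ζ ^ j) ^ (2 * n) = 1 := by rw [h1, one_pow]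
    rw [mul_pow, h2, mul_one, hφ] at h3
    exact h3
  have h1φ : 1 - φ ≠ 0 := by simpa using hone_sub 0
  have h1pφ : 1 + φ ≠ 0 := by
    have := hone_sub n
    rw [hζn] at this
    simpa [sub_neg_eq_add] using this
  have hφ2 : 1 - φ ^ 2 ≠ 0 := by
    have h := mul_ne_zero h1φ h1pφ
    intro h'; apply h; linear_combination h'
  set k := 2 * n - 1 with hkdef
  have hk : 2 * n = k + 1 := by omega
  have hkodd : Odd k := ⟨n - 1, by omega⟩
  have hmem0 : (0 : ℕ) ∈ Finset.range (2 * n) := by simp [h2n]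
  have hcard : ((Finset.range (2 * n)).erase 0).card = k := by
    rw [Finset.card_erase_of_mem hmem0, Finset.card_range]
  have Pid : (X ^ (2 * n) - 1 : (AlgebraicClosure F)[X])
      = ∏ j ∈ Finset.range (2 * n), (X - C (ζ ^ j)) := by
    rw [X_pow_sub_one_eq_prod h2n hζ]
    have himg : Polynomial.nthRootsFinset (2 * n) (1 : AlgebraicClosure F)
        = (Finset.range (2 * n)).image (ζ ^ ·) := by
      rw [Polynomial.nthRootsFinset_def, hζ.nthRoots_eq (one_pow (2 * n))]
      ext x
      simp [Finset.mem_image, mul_one]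
    rw [himg, Finset.prod_image]
    intro i hi j hj h
    exact hζ.injOn_pow (by simpa using hi) (by simpa using hj) h
  have gid : (∏ j ∈ (Finset.range (2 * n)).erase 0, (X - C (ζ ^ j)) : (AlgebraicClosure F)[X]) =
      ∑ i ∈ Finset.range (2 * n), X ^ i := by
    have h1 := Finset.mul_prod_erase (Finset.range (2 * n))
      (fun j => (X - C (ζ ^ j) : (AlgebraicClosure F)[X])) hmem0
    rw [← Pid] at h1
    have h2 : ((X : (AlgebraicClosure F)[X]) - C (ζ ^ 0)) * ∑ i ∈ Finset.range (2 * n), X ^ i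
        = (X ^ (2 * n) - 1 : (AlgebraicClosure F)[X]) := by
      rw [pow_zero, map_one, mul_comm]
      exact geom_sum_mul X (2 * n)
    have hXne : ((X : (AlgebraicClosure F)[X]) - C (ζ ^ 0)) ≠ 0 := X_sub_C_ne_zero _
    exact mul_left_cancel₀ hXne (h1.trans h2.symm)
  have S1 : (∏ j ∈ (Finset.range (2 * n)).erase 0, (1 - ζ ^ j)) = ((2 * n : ℕ) : AlgebraicClosure F) := by
    have h := congrArg (Polynomial.eval 1) gid
    simpa [Polynomial.eval_prod, Polynomial.eval_finset_sum] using h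
  have S1' : (∏ j ∈ (Finset.range (2 * n)).erase 0, (ζ ^ j - 1)) = -((2 * n : ℕ) : AlgebraicClosure F) := by
    calc (∏ j ∈ (Finset.range (2 * n)).erase 0, (ζ ^ j - 1))
        = ∏ j ∈ (Finset.range (2 * n)).erase 0, (-1) * (1 - ζ ^ j) :=
          Finset.prod_congr rfl (fun j _ => by ring)
      _ = ((-1) ^ k) * ∏ j ∈ (Finset.range (2 * n)).erase 0, (1 - ζ ^ j) := by
          rw [Finset.prod_mul_distrib, Finset.prod_const, hcard]
      _ = -((2 * n : ℕ) : AlgebraicClosure F) := by rw [S1, hkodd.neg_one_pow]; ring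
  have prodA : (∏ j ∈ Finset.range (2 * n), (1 - φ * ζ ^ j)) = 1 - cc := by
    have heval := congrArg (Polynomial.eval φ⁻¹) Pid
    simp only [Polynomial.eval_prod, Polynomial.eval_sub, Polynomial.eval_pow,
      Polynomial.eval_X, Polynomial.eval_C, Polynomial.eval_one] at heval
    calc (∏ j ∈ Finset.range (2 * n), (1 - φ * ζ ^ j))
        = ∏ j ∈ Finset.range (2 * n), φ * (φ⁻¹ - ζ ^ j) :=
          Finset.prod_congr rfl (fun j _ => by field_simp)
      _ = φ ^ (2 * n) * ∏ j ∈ Finset.range (2 * n), (φ⁻¹ - ζ ^ j) := by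
          rw [Finset.prod_mul_distrib, Finset.prod_const, Finset.card_range]
      _ = 1 - cc := by
          rw [← heval, inv_pow, hφ]
          field_simp
  have prodErase : (∏ j ∈ (Finset.range (2 * n)).erase 0, (1 - φ * ζ ^ j))
      = (1 - cc) / (1 - φ) := by
    have h1 := Finset.mul_prod_erase (Finset.range (2 * n))
      (fun j => 1 - φ * ζ ^ j) hmem0
    rw [prodA] at h1
    rw [eq_div_iff h1φ, mul_comm]
    simpa using h1
  -- split off the j = 0 factor
  have hsplit := Finset.mul_prod_erase (Finset.range (2 * n))
    (fun j => (X + C ((1 + φ * ζ ^ j) / (1 - φ * ζ ^ j)) : (AlgebraicClosure F)[X])) hmem0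
  simp only [pow_zero, mul_one] at hsplit
  set Q : (AlgebraicClosure F)[X] :=
    ∏ j ∈ (Finset.range (2 * n)).erase 0, (X + C ((1 + φ * ζ ^ j) / (1 - φ * ζ ^ j))) with hQdef
  have hPQ : P = (X + C ((1 + φ) / (1 - φ))) * Q := by rw [hP, ← hsplit]
  -- derivative evaluation
  have hD : (Polynomial.derivative P).eval (-((1 + φ) / (1 - φ)))
      = Q.eval (-((1 + φ) / (1 - φ))) := by
    rw [hPQ, derivative_mul, derivative_X_add_C]
    simp
  have hQeval : Q.eval (-((1 + φ) / (1 - φ)))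
      = ∏ j ∈ (Finset.range (2 * n)).erase 0,
          (-((1 + φ) / (1 - φ)) + (1 + φ * ζ ^ j) / (1 - φ * ζ ^ j)) := by
    rw [hQdef, Polynomial.eval_prod]
    simp
  have hfac : ∀ j ∈ (Finset.range (2 * n)).erase 0,
      (-((1 + φ) / (1 - φ)) + (1 + φ * ζ ^ j) / (1 - φ * ζ ^ j))
        = 2 * φ * (ζ ^ j - 1) / ((1 - φ) * (1 - φ * ζ ^ j)) := by
    intro j _
    have h := hone_sub j
    field_simp
    ring
  have Dval : (Polynomial.derivative P).eval (-((1 + φ) / (1 - φ)))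
      = ((2 * φ) ^ k * (-((2 * n : ℕ) : AlgebraicClosure F)))
        / ((1 - φ) ^ k * ((1 - cc) / (1 - φ))) := by
    rw [hD, hQeval, Finset.prod_congr rfl hfac, Finset.prod_div_distrib]
    congr 1
    · rw [Finset.prod_mul_distrib, Finset.prod_const, hcard, S1']
    · rw [Finset.prod_mul_distrib, Finset.prod_const, hcard, prodErase]
  -- eval at -1
  have hfac1 : ∀ j ∈ Finset.range (2 * n),
      (-1 + (1 + φ * ζ ^ j) / (1 - φ * ζ ^ j)) = 2 * φ * ζ ^ j / (1 - φ * ζ ^ j) := by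
    intro j _
    have h := hone_sub j
    field_simp
    ring
  have hknum : 2 * n - 1 = k := by omega
  have hsum : ∑ j ∈ Finset.range (2 * n), j = n * k := by
    have h2 := Finset.sum_range_id_mul_two (2 * n)
    rw [hknum] at h2
    apply Nat.eq_of_mul_eq_mul_right (by norm_num : 0 < 2)
    rw [h2]
    ring
  have hζsum : (∏ j ∈ Finset.range (2 * n), ζ ^ j) = -1 := by
    rw [Finset.prod_pow_eq_pow_sum, hsum, pow_mul, hζn, hkodd.neg_one_pow]
  have Pval : P.eval (-1) = ((2 * φ) ^ (2 * n) * (-1)) / (1 - cc) := by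
    rw [hP, Polynomial.eval_prod]
    simp only [Polynomial.eval_add, Polynomial.eval_X, Polynomial.eval_C]
    rw [Finset.prod_congr rfl hfac1, Finset.prod_div_distrib, Finset.prod_mul_distrib,
      Finset.prod_const, Finset.card_range, hζsum, prodA]
  -- final computation
  have hn0 : ((n : ℕ) : AlgebraicClosure F) ≠ 0 := Nat.cast_ne_zero.mpr (by omega)
  have h1ck : 1 - φ ^ (k + 1) ≠ 0 := by rw [← hk, hφ]; exact h1cc
  have key : (Polynomial.derivative P).eval (-((1 + φ) / (1 - φ))) * P.eval (-1) =
      (2 * φ⁻¹ / (1 - φ) ^ (2 * n - 1)) *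
        ((2 * n : AlgebraicClosure F) / (1 + φ)) *
        ((2 ^ k * cc / (1 - cc)) ^ 2 - (2 ^ k * cc / (1 - cc)) ^ 2 * φ ^ 2) := by
    rw [Dval, Pval, ← hφ, hknum]
    push_cast
    rw [hk, mul_pow, mul_pow]
    field_simp [hφ0, h1φ, h1pφ, h1ck]
    ring
  -- nonzeroness of the norm factor
  have hsne : (2 : AlgebraicClosure F) ^ k * cc / (1 - cc) ≠ 0 :=
    div_ne_zero (mul_ne_zero (pow_ne_zero _ two_ne_zero) hcc0) h1cc
  have hEne : (2 ^ k * cc / (1 - cc)) ^ 2 - (2 ^ k * cc / (1 - cc)) ^ 2 * φ ^ 2 ≠ 0 := by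
    have hrw : (2 ^ k * cc / (1 - cc)) ^ 2 - (2 ^ k * cc / (1 - cc)) ^ 2 * φ ^ 2
        = (2 ^ k * cc / (1 - cc)) ^ 2 * (1 - φ ^ 2) := by ring
    rw [hrw]
    exact mul_ne_zero (pow_ne_zero _ hsne) hφ2
  have hn0' : ((n : ℕ) : AlgebraicClosure F) ≠ 0 := Nat.cast_ne_zero.mpr (by omega)
  -- memberships
  have hφS : φ ∈ IntermediateField.adjoin F {φ} :=
    IntermediateField.subset_adjoin F {φ} rfl
  have h2S : (2 : AlgebraicClosure F) ∈ IntermediateField.adjoin F {φ} := by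
    have := (IntermediateField.adjoin F {φ}).algebraMap_mem (2 : F)
    rwa [map_ofNat] at this
  have hnS : ((n : ℕ) : AlgebraicClosure F) ∈ IntermediateField.adjoin F {φ} := by
    have := (IntermediateField.adjoin F {φ}).algebraMap_mem ((n : ℕ) : F)
    rwa [map_natCast] at this
  have hccS : cc ∈ IntermediateField.adjoin F {φ} :=
    (IntermediateField.adjoin F {φ}).algebraMap_mem c
  have hsS : 2 ^ k * cc / (1 - cc) ∈ IntermediateField.adjoin F {φ} :=
    div_mem (mul_mem (pow_mem h2S k) hccS) (sub_mem (one_mem _) hccS)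
  have h2K : (2 : AlgebraicClosure F) ∈ IntermediateField.adjoin F {φ ^ 2} := by
    have := (IntermediateField.adjoin F {φ ^ 2}).algebraMap_mem (2 : F)
    rwa [map_ofNat] at this
  have hccK : cc ∈ IntermediateField.adjoin F {φ ^ 2} :=
    (IntermediateField.adjoin F {φ ^ 2}).algebraMap_mem c
  have hsK : 2 ^ k * cc / (1 - cc) ∈ IntermediateField.adjoin F {φ ^ 2} :=
    div_mem (mul_mem (pow_mem h2K k) hccK) (sub_mem (one_mem _) hccK)
  refine ⟨?_, ?_, 2 ^ k * cc / (1 - cc), 2 ^ k * cc / (1 - cc), hsK, hsK, hEne, key⟩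
  · rw [key]
    exact mul_mem
      (mul_mem
        (div_mem (mul_mem h2S (inv_mem hφS)) (pow_mem (sub_mem (one_mem _) hφS) _))
        (div_mem (mul_mem h2S hnS) (add_mem (one_mem _) hφS)))
      (sub_mem (pow_mem hsS 2) (mul_mem (pow_mem hsS 2) (pow_mem hφS 2)))
  · rw [key]
    exact mul_ne_zero
      (mul_ne_zero
        (div_ne_zero (mul_ne_zero two_ne_zero (inv_ne_zero hφ0)) (pow_ne_zero _ h1φ))
        (div_ne_zero (mul_ne_zero two_ne_zero hn0') h1pφ))
      hEne
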